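/- Assume the poset of contexts of A satisfies the ascending chain condition: every increasing sequence C₁ ⊆ C₂ ⊆ C₃ ⊆ ⋯ of contexts is eventually constant. Then Σ_* is a sober space: every nonempty irreducible closed subset F of Σ_* is the closure of a unique point, i.e. there exists exactly one (C,λ) ∈ Σ with F = closure({(C,λ)}) in Σ_*. In particular this holds whenever A is finite-dimensional. -/
import Mathlib


open WeakDual

variable (A : Type*) [CStarAlgebra A]

/-- A classical context: a commutative unital closed star-subalgebra of `A`. -/
structure Context where
  carrier : Subalgebra ℂ A
  star_mem' : ∀ x ∈ carrier, star x ∈ carrier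
  isClosed' : IsClosed (carrier : Set A)
  mul_comm' : ∀ x ∈ carrier, ∀ y ∈ carrier, x * y = y * x

variable {A}

/-- The Gelfand spectrum of a context: the character space of `C`. -/
abbrev Context.Spec (C : Context A) : Type _ := characterSpace ℂ C.carrier

/-- The inclusion of a smaller context into a larger one, as a continuous linear map. -/
def Context.inclCLM {D C : Context A} (h : D.carrier ≤ C.carrier) :
    D.carrier →L[ℂ] C.carrier where
  toLinearMap := (Subalgebra.inclusion h).toLinearMap
  cont := continuous_induced_rng.mpr continuous_subtype_val

/-- Restriction of a character along an inclusion of contexts. -/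
noncomputable def Context.restrictChar {D C : Context A} (h : D.carrier ≤ C.carrier)
    (lam : C.Spec) : D.Spec :=
  ⟨(lam : WeakDual ℂ C.carrier).comp (Context.inclCLM h), by
    constructor
    · intro h0
      have h1 : (lam : WeakDual ℂ C.carrier).comp (Context.inclCLM h) (1 : D.carrier) = 0 := by
        rw [h0]; rfl
      have h2 : (lam : WeakDual ℂ C.carrier).comp (Context.inclCLM h) (1 : D.carrier) = 1 := by
        show lam ((Context.inclCLM h) (1 : D.carrier)) = 1
        have h3 : (Context.inclCLM h) (1 : D.carrier) = (1 : C.carrier) := rfl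
        rw [h3]
        exact map_one lam
      rw [h1] at h2
      exact zero_ne_one h2
    · intro x y
      show lam ((Context.inclCLM h) (x * y)) = lam ((Context.inclCLM h) x) * lam ((Context.inclCLM h) y)
      have h4 : (Context.inclCLM h) (x * y) = (Context.inclCLM h) x * (Context.inclCLM h) y := rfl
      rw [h4]
      exact map_mul lam _ _⟩


/-- The disjoint union of all Gelfand spectra of contexts. -/
abbrev SigmaSpace (A : Type*) [CStarAlgebra A] : Type _ := (C : Context A) × C.Spec

/-- The Alexandrov topology on the poset of contexts: opens are the upward closed sets. -/
instance : TopologicalSpace (Context A) where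
  IsOpen s := ∀ C ∈ s, ∀ D : Context A, C.carrier ≤ D.carrier → D ∈ s
  isOpen_univ := fun _ _ _ _ => trivial
  isOpen_inter := fun s t hs ht C hC D hD => ⟨hs C hC.1 D hD, ht C hC.2 D hD⟩
  isOpen_sUnion := fun S hS C hC D hD => by
    obtain ⟨s, hsS, hCs⟩ := hC
    exact ⟨s, hsS, hS s hsS C hCs D hD⟩

/-- The topology `𝒪 Σ_*` of the covariant approach: a set is open iff each of its fibres
is open and it is closed under passing to extensions of characters. -/
instance : TopologicalSpace (SigmaSpace A) where
  IsOpen U := (∀ C : Context A, IsOpen {lam : C.Spec | Sigma.mk C lam ∈ U}) ∧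
    ∀ (C C' : Context A) (h : C.carrier ≤ C'.carrier) (lam' : C'.Spec),
      Sigma.mk C (Context.restrictChar h lam') ∈ U → Sigma.mk C' lam' ∈ U
  isOpen_univ := ⟨fun _ => isOpen_univ, fun _ _ _ _ _ => trivial⟩
  isOpen_inter := fun U V hU hV => ⟨fun C => (hU.1 C).inter (hV.1 C),
    fun C C' h lam hm => ⟨hU.2 C C' h lam hm.1, hV.2 C C' h lam hm.2⟩⟩
  isOpen_sUnion := fun S hS => by
    constructor
    · intro C
      have h1 : {lam : C.Spec | Sigma.mk C lam ∈ ⋃₀ S} =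
          ⋃ U ∈ S, {lam : C.Spec | Sigma.mk C lam ∈ U} := by
        ext lam; simp
      rw [h1]
      exact isOpen_biUnion fun U hU => (hS U hU).1 C
    · rintro C C' h lam ⟨U, hUS, hmU⟩
      exact ⟨U, hUS, (hS U hUS).2 C C' h lam hmU⟩

example (C : Context A) : T2Space C.Spec := by infer_instance

lemma restrictChar_refl {C : Context A} (lam : C.Spec) :
    Context.restrictChar le_rfl lam = lam := by
  ext x
  show lam ⟨x.1, _⟩ = lam x
  congr

lemma restrictChar_trans {E D C : Context A} (h1 : E.carrier ≤ D.carrier)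
    (h2 : D.carrier ≤ C.carrier) (lam : C.Spec) :
    Context.restrictChar h1 (Context.restrictChar h2 lam) =
      Context.restrictChar (h1.trans h2) lam := rfl

lemma restrictChar_continuous {D C : Context A} (h : D.carrier ≤ C.carrier) :
    Continuous fun lam : C.Spec => Context.restrictChar h lam := by
  apply continuous_induced_rng.mpr
  apply WeakDual.continuous_of_continuous_eval
  intro y
  show Continuous fun lam : C.Spec => (lam : WeakDual ℂ C.carrier) ((Context.inclCLM h) y)
  exact (WeakDual.eval_continuous _).comp continuous_subtype_val

lemma Context.ext' {C D : Context A} (h : C.carrier = D.carrier) : C = D := by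
  cases C; cases D; simp_all

lemma isClosed_iff' (F : Set (SigmaSpace A)) :
    IsClosed F ↔ (∀ C : Context A, IsClosed {lam : C.Spec | Sigma.mk C lam ∈ F}) ∧
      ∀ (C C' : Context A) (h : C.carrier ≤ C'.carrier) (lam' : C'.Spec),
        Sigma.mk C' lam' ∈ F → Sigma.mk C (Context.restrictChar h lam') ∈ F := by
  rw [← isOpen_compl_iff]
  show ((∀ C : Context A, IsOpen {lam : C.Spec | Sigma.mk C lam ∈ Fᶜ}) ∧ _) ↔ _
  have hc : ∀ C : Context A,
      {lam : C.Spec | Sigma.mk C lam ∈ Fᶜ} = {lam : C.Spec | Sigma.mk C lam ∈ F}ᶜ :=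
    fun C => rfl
  constructor
  · rintro ⟨h1, h2⟩
    refine ⟨fun C => ?_, fun C C' h lam' hm => ?_⟩
    · rw [← isOpen_compl_iff, ← hc C]; exact h1 C
    · by_contra hcon
      exact (h2 C C' h lam' hcon) hm
  · rintro ⟨h1, h2⟩
    refine ⟨fun C => ?_, fun C C' h lam' hm hcon => ?_⟩
    · rw [hc C, isOpen_compl_iff]; exact h1 C
    · exact hm (h2 C C' h lam' hcon)

lemma closure_singleton_eq (C : Context A) (lam : C.Spec) :
    closure {(⟨C, lam⟩ : SigmaSpace A)} =
      {q : SigmaSpace A | ∃ h : q.1.carrier ≤ C.carrier, q.2 = Context.restrictChar h lam} := by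
  have hcl : IsClosed {q : SigmaSpace A |
      ∃ h : q.1.carrier ≤ C.carrier, q.2 = Context.restrictChar h lam} := by
    rw [isClosed_iff']
    constructor
    · intro D
      by_cases hD : D.carrier ≤ C.carrier
      · have : {mu : D.Spec | Sigma.mk D mu ∈ {q : SigmaSpace A |
            ∃ h : q.1.carrier ≤ C.carrier, q.2 = Context.restrictChar h lam}} =
            {Context.restrictChar hD lam} := by
          ext mu
          simp only [Set.mem_setOf_eq, Set.mem_singleton_iff]
          exact ⟨fun ⟨h, hh⟩ => hh, fun h => ⟨hD, h⟩⟩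
        rw [this]; exact isClosed_singleton
      · have : {mu : D.Spec | Sigma.mk D mu ∈ {q : SigmaSpace A |
            ∃ h : q.1.carrier ≤ C.carrier, q.2 = Context.restrictChar h lam}} = ∅ := by
          ext mu
          simp only [Set.mem_setOf_eq, Set.mem_empty_iff_false, iff_false]
          rintro ⟨h, -⟩; exact hD h
        rw [this]; exact isClosed_empty
    · rintro D D' h lam' ⟨h', heq⟩
      have h2 : D'.carrier ≤ C.carrier := h'
      refine ⟨h.trans h2, ?_⟩
      show Context.restrictChar h lam' = _
      rw [show lam' = Context.restrictChar h2 lam from heq, restrictChar_trans]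
  apply subset_antisymm
  · apply closure_minimal _ hcl
    rintro q rfl
    exact ⟨le_rfl, (restrictChar_refl lam).symm⟩
  · rintro ⟨D, mu⟩ ⟨h, heq⟩
    have h2 : D.carrier ≤ C.carrier := h
    have hF := isClosed_closure (s := ({(⟨C, lam⟩ : SigmaSpace A)} : Set (SigmaSpace A)))
    rw [isClosed_iff'] at hF
    have := hF.2 D C h2 lam (subset_closure rfl)
    rw [show mu = Context.restrictChar h2 lam from heq]
    exact this

lemma isOpen_pull (C : Context A) (O : Set C.Spec) (hO : IsOpen O) :
    IsOpen {q : SigmaSpace A | ∃ h : C.carrier ≤ q.1.carrier, Context.restrictChar h q.2 ∈ O} := by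
  constructor
  · intro D
    by_cases hD : C.carrier ≤ D.carrier
    · have : {lam : D.Spec | Sigma.mk D lam ∈ {q : SigmaSpace A |
          ∃ h : C.carrier ≤ q.1.carrier, Context.restrictChar h q.2 ∈ O}} =
          (fun lam : D.Spec => Context.restrictChar hD lam) ⁻¹' O := by
        ext lam
        simp only [Set.mem_setOf_eq, Set.mem_preimage]
        exact ⟨fun ⟨h, hh⟩ => hh, fun h => ⟨hD, h⟩⟩
      rw [this]
      exact hO.preimage (restrictChar_continuous hD)
    · have : {lam : D.Spec | Sigma.mk D lam ∈ {q : SigmaSpace A |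
          ∃ h : C.carrier ≤ q.1.carrier, Context.restrictChar h q.2 ∈ O}} = ∅ := by
        ext lam
        simp only [Set.mem_setOf_eq, Set.mem_empty_iff_false, iff_false]
        rintro ⟨h, -⟩; exact hD h
      rw [this]; exact isOpen_empty
  · rintro D D' h lam' ⟨h1, hm⟩
    have h1' : C.carrier ≤ D.carrier := h1
    refine ⟨h1'.trans h, ?_⟩
    have : Context.restrictChar h1 (Context.restrictChar h lam') =
        Context.restrictChar (h1'.trans h) lam' := restrictChar_trans _ _ _
    rw [← this]; exact hm

lemma isOpen_upSet (C : Context A) :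
    IsOpen {q : SigmaSpace A | C.carrier ≤ q.1.carrier} := by
  constructor
  · intro D
    by_cases hD : C.carrier ≤ D.carrier
    · have : {lam : D.Spec | Sigma.mk D lam ∈ {q : SigmaSpace A | C.carrier ≤ q.1.carrier}}
          = Set.univ := by
        ext lam; simpa using hD
      rw [this]; exact isOpen_univ
    · have : {lam : D.Spec | Sigma.mk D lam ∈ {q : SigmaSpace A | C.carrier ≤ q.1.carrier}}
          = ∅ := by
        ext lam; simpa using hD
      rw [this]; exact isOpen_empty
  · rintro D D' h lam' h1
    exact le_trans h1 h

lemma fiber_subsingleton {F : Set (SigmaSpace A)} (hF : IsIrreducible F) (C : Context A)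
    {lam mu : C.Spec} (hlam : Sigma.mk C lam ∈ F) (hmu : Sigma.mk C mu ∈ F) : lam = mu := by
  by_contra hne
  obtain ⟨O1, O2, hO1, hO2, hl1, hl2, hdisj⟩ := t2_separation hne
  have hU1 := isOpen_pull C O1 hO1
  have hU2 := isOpen_pull C O2 hO2
  have hm1 : Sigma.mk C lam ∈ {q : SigmaSpace A |
      ∃ h : C.carrier ≤ q.1.carrier, Context.restrictChar h q.2 ∈ O1} :=
    ⟨le_rfl, by rw [restrictChar_refl]; exact hl1⟩
  have hm2 : Sigma.mk C mu ∈ {q : SigmaSpace A |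
      ∃ h : C.carrier ≤ q.1.carrier, Context.restrictChar h q.2 ∈ O2} :=
    ⟨le_rfl, by rw [restrictChar_refl]; exact hl2⟩
  obtain ⟨q, hqF, ⟨h1, hq1⟩, ⟨h2, hq2⟩⟩ :=
    hF.2 _ _ hU1 hU2 ⟨_, hlam, hm1⟩ ⟨_, hmu, hm2⟩
  have : Context.restrictChar h1 q.2 = Context.restrictChar h2 q.2 := rfl
  rw [this] at hq1
  exact Set.disjoint_left.mp hdisj hq1 hq2

lemma exists_maximal
    (hacc : ∀ f : ℕ → Context A, (∀ k, (f k).carrier ≤ (f (k + 1)).carrier) →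
      ∃ N, ∀ m, N ≤ m → f m = f N)
    (S : Set (Context A)) (hS : S.Nonempty) :
    ∃ C ∈ S, ∀ D ∈ S, C.carrier ≤ D.carrier → C = D := by
  by_contra hc
  push_neg at hc
  have step : ∀ C : {C // C ∈ S}, ∃ D : {C // C ∈ S},
      C.1.carrier ≤ D.1.carrier ∧ C.1 ≠ D.1 := by
    rintro ⟨C, hCS⟩
    obtain ⟨D, hDS, hle, hne⟩ := hc C hCS
    exact ⟨⟨D, hDS⟩, hle, hne⟩
  choose g hg1 hg2 using step
  obtain ⟨C0, hC0⟩ := hS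
  let f : ℕ → {C // C ∈ S} := fun n => Nat.rec ⟨C0, hC0⟩ (fun _ C => g C) n
  have hmono : ∀ k, ((f k).1).carrier ≤ ((f (k+1)).1).carrier := fun k => hg1 (f k)
  obtain ⟨N, hN⟩ := hacc (fun n => (f n).1) hmono
  exact hg2 (f N) ((hN (N+1) (Nat.le_succ N)).symm ▸ rfl)

/-- If the poset of contexts of `A` satisfies the ascending chain
condition (every increasing sequence of contexts is eventually constant), then `Σ_*` is a
sober space: every irreducible closed subset is the closure of a unique point. -/
theorem statement12
    (hacc : ∀ f : ℕ → Context A, (∀ k, (f k).carrier ≤ (f (k + 1)).carrier) →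
      ∃ N, ∀ m, N ≤ m → f m = f N) :
    ∀ F : Set (SigmaSpace A), IsClosed F → IsIrreducible F →
      ∃! p : SigmaSpace A, F = closure {p} := by
  intro F hFc hFi
  have hFc' := (isClosed_iff' F).mp hFc
  obtain ⟨hfib, hdown⟩ := hFc'
  obtain ⟨⟨C0, l0⟩, hmem0⟩ := hFi.1
  obtain ⟨C, hCS, hmax⟩ := exists_maximal hacc {C : Context A | ∃ lam : C.Spec,
    Sigma.mk C lam ∈ F} ⟨C0, l0, hmem0⟩
  obtain ⟨lam, hlamF⟩ := hCS
  have hFeq : F = closure {(⟨C, lam⟩ : SigmaSpace A)} := by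
    rw [closure_singleton_eq]
    apply subset_antisymm
    · rintro ⟨D, mu⟩ hDmu
      obtain ⟨q, hqF, hqC, hqD⟩ := hFi.2 _ _ (isOpen_upSet C) (isOpen_upSet D)
        ⟨_, hlamF, le_refl C.carrier⟩ ⟨_, hDmu, le_refl D.carrier⟩
      have hq2 : Sigma.mk q.1 q.2 ∈ F := by rw [Sigma.eta]; exact hqF
      have hCq : C = q.1 := hmax q.1 ⟨q.2, hq2⟩ hqC
      have hDC : D.carrier ≤ C.carrier := by rw [hCq]; exact hqD
      have hres : Sigma.mk D (Context.restrictChar hDC lam) ∈ F := hdown D C hDC lam hlamF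
      have : mu = Context.restrictChar hDC lam := fiber_subsingleton hFi D hDmu hres
      exact ⟨hDC, this⟩
    · rintro ⟨D, mu⟩ ⟨h, heq⟩
      have h2 : D.carrier ≤ C.carrier := h
      have := hdown D C h2 lam hlamF
      rw [show mu = Context.restrictChar h2 lam from heq]
      exact this
  refine ⟨⟨C, lam⟩, hFeq, ?_⟩
  rintro ⟨D, mu⟩ hDeq
  have h1 : Sigma.mk C lam ∈ closure {(⟨D, mu⟩ : SigmaSpace A)} := by
    rw [← hDeq]; exact hlamF
  rw [closure_singleton_eq] at h1
  obtain ⟨hCD, hlmu⟩ := h1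
  have h2 : Sigma.mk D mu ∈ closure {(⟨C, lam⟩ : SigmaSpace A)} := by
    rw [← hFeq, hDeq]; exact subset_closure rfl
  rw [closure_singleton_eq] at h2
  obtain ⟨hDC, hmul⟩ := h2
  have hCD' : (C : Context A).carrier ≤ D.carrier := hCD
  have hDC' : (D : Context A).carrier ≤ C.carrier := hDC
  have hCDeq : D = C := Context.ext' (le_antisymm hDC' hCD')
  subst hCDeq
  have : mu = lam := by
    rw [show mu = Context.restrictChar hDC lam from hmul]
    exact restrictChar_refl lam
  rw [this]
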